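/- Let X_1, ..., X_n be i.i.d. samples from a distribution on [0,1] with an L-Lipschitz density π. Let π̂^hist be the ε-DP private histogram estimator with bin size h (where 1/h ∈ ℕ): on each bin b, π̂^hist equals (1/(nh))(Σ_{i=1}^n 1_b(X_i) + (2/ε)L_b), with L_b independent standard Laplace noise. Then for any γ > Lh, P(‖π̂^hist - π‖_∞ > γ) ≤ (1/h)·exp(-γhnε/4) + (2/h)·exp(-h²(γ - Lh)²n/4). -/

import Mathlib

open scoped Classical

open MeasureTheory ProbabilityTheory

open Real

lemma my_g_pos {p : ℝ} (hp0 : 0 ≤ p) (hp1 : p ≤ 1) (t : ℝ) : 0 < 1 - p + p * exp t := by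
  rcases hp1.lt_or_eq with hp | hp
  · have : 0 ≤ p * exp t := mul_nonneg hp0 (exp_pos t).le
    linarith
  · subst hp; simpa using exp_pos t

lemma my_hoeffding (p t : ℝ) (hp0 : 0 ≤ p) (hp1 : p ≤ 1) :
    exp (-(t*p)) * (1 - p + p * exp t) ≤ exp (t^2/8) := by
  set f : ℝ → ℝ := fun s => p*s + s^2/8 - Real.log (1 - p + p * exp s) with hf
  set f' : ℝ → ℝ := fun s => p + s/4 - p * exp s / (1 - p + p * exp s) with hf'
  have hg := my_g_pos hp0 hp1
  have hder : ∀ s, HasDerivAt f (f' s) s := by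
    intro s
    have h1 : HasDerivAt (fun s : ℝ => 1 - p + p * exp s) (p * exp s) s := by
      simpa using (((Real.hasDerivAt_exp s).const_mul p).const_add (1 - p))
    have h2 : HasDerivAt (fun s : ℝ => Real.log (1 - p + p * exp s))
        (p * exp s / (1 - p + p * exp s)) s := h1.log (hg s).ne'
    have h3 : HasDerivAt (fun s : ℝ => p*s + s^2/8) (p + s/4) s := by
      have := ((hasDerivAt_id s).const_mul p).add
        (((hasDerivAt_pow 2 s)).div_const 8)
      refine this.congr_deriv ?_
      norm_num
      ring
    exact h3.sub h2
  have hder' : ∀ s, HasDerivAt f'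
      (1/4 - p * exp s * (1 - p) / (1 - p + p * exp s)^2) s := by
    intro s
    have h1 : HasDerivAt (fun s : ℝ => 1 - p + p * exp s) (p * exp s) s := by
      simpa using (((Real.hasDerivAt_exp s).const_mul p).const_add (1 - p))
    have h2 : HasDerivAt (fun s : ℝ => p * exp s) (p * exp s) s :=
      (Real.hasDerivAt_exp s).const_mul p
    have h3 : HasDerivAt (fun s : ℝ => p * exp s / (1 - p + p * exp s))
        ((p * exp s * (1 - p + p * exp s) - p * exp s * (p * exp s)) / (1 - p + p * exp s)^2)
        s := h2.div h1 (hg s).ne'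
    have h4 : HasDerivAt (fun s : ℝ => p + s/4) (1/4) s := by
      simpa using ((hasDerivAt_id s).div_const 4).const_add p
    have := h4.sub h3
    refine this.congr_deriv ?_
    ring
  have hf'nonneg : ∀ s, 0 ≤ 1/4 - p * exp s * (1 - p) / (1 - p + p * exp s)^2 := by
    intro s
    rw [sub_nonneg, div_le_iff₀ (pow_pos (hg s) 2)]
    nlinarith [sq_nonneg (1 - p - p * exp s), mul_nonneg hp0 (exp_pos s).le, sub_nonneg.mpr hp1]
  have hf'mono : Monotone f' :=
    monotone_of_deriv_nonneg (fun s => (hder' s).differentiableAt)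
      (fun s => by rw [(hder' s).deriv]; exact hf'nonneg s)
  have hf'zero : f' 0 = 0 := by simp [hf']
  have hfzero : f 0 = 0 := by simp [hf]
  have hcont : Continuous f := by
    have : Differentiable ℝ f := fun s => (hder s).differentiableAt
    exact this.continuous
  have hfnonneg : ∀ s, 0 ≤ f s := by
    intro s
    rcases le_total 0 s with hs | hs
    · have hm : MonotoneOn f (Set.Ici 0) := by
        refine monotoneOn_of_deriv_nonneg (convex_Ici 0) hcont.continuousOn
          (fun x _ => (hder x).differentiableAt.differentiableWithinAt) ?_
        intro x hx
        rw [interior_Ici] at hx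
        rw [(hder x).deriv]
        rw [← hf'zero]
        exact hf'mono (le_of_lt hx)
      have := hm (Set.self_mem_Ici) (Set.mem_Ici.mpr hs) hs
      rwa [hfzero] at this
    · have hm : AntitoneOn f (Set.Iic 0) := by
        refine antitoneOn_of_deriv_nonpos (convex_Iic 0) hcont.continuousOn
          (fun x _ => (hder x).differentiableAt.differentiableWithinAt) ?_
        intro x hx
        rw [interior_Iic] at hx
        rw [(hder x).deriv]
        rw [← hf'zero]
        exact hf'mono (le_of_lt hx)
      have := hm (Set.mem_Iic.mpr hs) Set.self_mem_Iic hs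
      rwa [hfzero] at this
  have key := hfnonneg t
  have hlog : Real.log (1 - p + p * exp t) ≤ p * t + t^2/8 := by
    simp only [hf] at key; linarith
  calc exp (-(t*p)) * (1 - p + p * exp t)
      = exp (-(t*p) + Real.log (1 - p + p * exp t)) := by
        rw [exp_add, exp_log (hg t)]
    _ ≤ exp (t^2/8) := by
        apply exp_le_exp.mpr
        linarith

lemma my_laplace_tail (a : ℝ) (ha : 0 ≤ a) :
    (volume.withDensity fun t : ℝ => ENNReal.ofReal ((1/2) * Real.exp (-|t|)))
      {x : ℝ | a < |x|} ≤ ENNReal.ofReal (Real.exp (-a)) := by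
  have hset : {x : ℝ | a < |x|} = Set.Iio (-a) ∪ Set.Ioi a := by
    ext x
    simp only [Set.mem_setOf_eq, Set.mem_union, Set.mem_Iio, Set.mem_Ioi, lt_abs, lt_neg]
    tauto
  have hmeasset : MeasurableSet {x : ℝ | a < |x|} := by
    rw [hset]; exact measurableSet_Iio.union measurableSet_Ioi
  rw [withDensity_apply _ hmeasset, hset]
  have hIoi : ∫⁻ x in Set.Ioi a, ENNReal.ofReal ((1/2) * Real.exp (-|x|)) ∂volume
      = ENNReal.ofReal ((1/2) * Real.exp (-a)) := by
    have hcongr : ∀ x ∈ Set.Ioi a, ENNReal.ofReal ((1/2) * Real.exp (-|x|))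
        = ENNReal.ofReal ((1/2) * Real.exp (-x)) := by
      intro x hx
      rw [abs_of_nonneg (le_of_lt (lt_of_le_of_lt ha hx))]
    rw [setLIntegral_congr_fun measurableSet_Ioi hcongr]
    rw [← ofReal_integral_eq_lintegral_ofReal]
    · rw [MeasureTheory.integral_const_mul, integral_exp_neg_Ioi]
    · simpa using (exp_neg_integrableOn_Ioi a one_pos).const_mul (1/2:ℝ)
    · exact Filter.Eventually.of_forall fun x => by positivity
  have hIio : ∫⁻ x in Set.Iio (-a), ENNReal.ofReal ((1/2) * Real.exp (-|x|)) ∂volume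
      = ENNReal.ofReal ((1/2) * Real.exp (-a)) := by
    have hcongr : ∀ x ∈ Set.Iio (-a), ENNReal.ofReal ((1/2) * Real.exp (-|x|))
        = ENNReal.ofReal ((1/2) * Real.exp x) := by
      intro x hx
      simp only [Set.mem_Iio] at hx
      rw [abs_of_nonpos (by linarith), neg_neg]
    rw [setLIntegral_congr_fun measurableSet_Iio hcongr]
    have : (volume : Measure ℝ).restrict (Set.Iio (-a)) = volume.restrict (Set.Iic (-a)) := by
      rw [← MeasureTheory.restrict_Iio_eq_restrict_Iic]
    rw [this, ← ofReal_integral_eq_lintegral_ofReal]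
    · rw [MeasureTheory.integral_const_mul, integral_exp_Iic]
    · exact (integrableOn_exp_Iic (-a)).const_mul _
    · exact Filter.Eventually.of_forall fun x => by positivity
  rw [lintegral_union measurableSet_Ioi (((Set.Iic_disjoint_Ioi (by linarith : -a ≤ a)).mono_left Set.Iio_subset_Iic_self)),
    hIio, hIoi, ← ENNReal.ofReal_add (by positivity) (by positivity)]
  apply le_of_eq
  congr 1
  ring

lemma my_precomp {Ω ι κ β : Type*} [MeasurableSpace Ω] [mβ : MeasurableSpace β]
    {μ : Measure Ω} {f : ι → Ω → β}
    (h : iIndepFun f μ) {g : κ → ι} (hg : Function.Injective g) :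
    iIndepFun (fun j => f (g j)) μ := by
  classical
  rw [iIndepFun_iff_measure_inter_preimage_eq_mul] at h ⊢
  intro S sets hsets
  set sets' : ι → Set β := fun i =>
    if hi : ∃ j ∈ S, g j = i then sets hi.choose else Set.univ with hsets'def
  have hkey : ∀ j ∈ S, sets' (g j) = sets j := by
    intro j hj
    have hi : ∃ j' ∈ S, g j' = g j := ⟨j, hj, rfl⟩
    have : sets' (g j) = sets hi.choose := dif_pos hi
    rw [this]
    have hspec := hi.choose_spec
    have := hg hspec.2
    rw [this]
  have hmeas' : ∀ i ∈ S.image g, MeasurableSet[mβ] (sets' i) := by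
    intro i hi
    rcases Finset.mem_image.mp hi with ⟨j, hj, rfl⟩
    rw [hkey j hj]
    exact hsets j hj
  have h1 := h (S.image g) hmeas'
  have hinter : (⋂ i ∈ S.image g, f i ⁻¹' sets' i) = ⋂ j ∈ S, f (g j) ⁻¹' sets j := by
    ext ω
    simp only [Set.mem_iInter, Finset.mem_image]
    constructor
    · intro hw j hj
      have := hw (g j) ⟨j, hj, rfl⟩
      rwa [hkey j hj] at this
    · rintro hw i ⟨j, hj, rfl⟩
      rw [hkey j hj]
      exact hw j hj
  have hprod : ∏ i ∈ S.image g, μ (f i ⁻¹' sets' i) = ∏ j ∈ S, μ (f (g j) ⁻¹' sets j) := by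
    rw [Finset.prod_image (fun a _ b _ hab => hg hab)]
    exact Finset.prod_congr rfl fun j hj => by rw [hkey j hj]
  rw [hinter, hprod] at h1
  exact h1

lemma my_int_bdd {Ω : Type*} [MeasurableSpace Ω] {P : Measure Ω} [IsProbabilityMeasure P]
    {f : Ω → ℝ} (hf : Measurable f) {C : ℝ} (hC : ∀ ω, |f ω| ≤ C) : Integrable f P :=
  (integrable_const C).mono' hf.aestronglyMeasurable
    (Filter.Eventually.of_forall fun ω => by simpa using hC ω)

lemma my_binom_upper {Ω : Type*} [MeasurableSpace Ω] (P : Measure Ω) [IsProbabilityMeasure P]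
    (n : ℕ) (Y : Fin n → Ω → ℝ) (hY01 : ∀ i ω, Y i ω = 0 ∨ Y i ω = 1)
    (hmeas : ∀ i, Measurable (Y i))
    (hind : iIndepFun Y P)
    (p : ℝ) (hp0 : 0 ≤ p) (hp1 : p ≤ 1) (hmean : ∀ i, ∫ ω, Y i ω ∂P = p)
    (u : ℝ) (hu : 0 < u) :
    P {ω | (n:ℝ) * u ≤ (∑ i, Y i ω) - n * p} ≤
      ENNReal.ofReal (Real.exp (-(2 * n * u^2))) := by
  set t : ℝ := 4 * u with ht_def
  have ht : 0 ≤ t := by positivity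
  set Z : Fin n → Ω → ℝ := fun i ω => Y i ω - p with hZ
  have hZmeas : ∀ i, Measurable (Z i) := fun i => (hmeas i).sub_const p
  have hZind : iIndepFun Z P := by
    have := hind.comp (fun _ (x : ℝ) => x - p) (fun _ => measurable_id.sub_const p)
    exact this
  have hZbdd : ∀ i ω, |Z i ω| ≤ 1 := by
    intro i ω
    rcases hY01 i ω with h0 | h1
    · have hz : Z i ω = -p := by simp [hZ, h0]
      rw [hz, abs_le]; constructor <;> linarith
    · have hz : Z i ω = 1 - p := by simp [hZ, h1]
      rw [hz, abs_le]; constructor <;> linarith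
  have hWeq : ∀ ω, (∑ i, Z i) ω = (∑ i, Y i ω) - n * p := by
    intro ω
    simp only [Finset.sum_apply, hZ, Finset.sum_sub_distrib, Finset.sum_const,
      Finset.card_univ, Fintype.card_fin, nsmul_eq_mul]
  have hsetEq : {ω | (n:ℝ) * u ≤ (∑ i, Y i ω) - n * p} = {ω | (n:ℝ) * u ≤ (∑ i, Z i) ω} := by
    ext ω; rw [Set.mem_setOf_eq, Set.mem_setOf_eq, hWeq]
  -- integrability of exp (t * Z i)
  have hZint : ∀ i, Integrable (fun ω => exp (t * Z i ω)) P := by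
    intro i
    refine my_int_bdd (((hZmeas i).const_mul t).exp) (C := exp (|t|)) fun ω => ?_
    rw [abs_of_nonneg (exp_pos _).le, exp_le_exp]
    calc t * Z i ω ≤ |t * Z i ω| := le_abs_self _
      _ = |t| * |Z i ω| := abs_mul _ _
      _ ≤ |t| * 1 := by gcongr; exact hZbdd i ω
      _ = |t| := mul_one _
  have hint : Integrable (fun ω => exp (t * (∑ i, Z i) ω)) P :=
    hZind.integrable_exp_mul_sum hZmeas (fun i _ => hZint i)
  have hchern := measure_ge_le_exp_mul_mgf (μ := P) (X := ∑ i, Z i) ((n:ℝ) * u) ht hint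
  -- mgf computation
  have hmgfi : ∀ i, mgf (Z i) P t = exp (-(t*p)) * (1 - p + p * exp t) := by
    intro i
    have hptw : ∀ ω, exp (t * Z i ω) = exp (-(t*p)) * (1 + (exp t - 1) * Y i ω) := by
      intro ω
      rcases hY01 i ω with h0 | h1
      · have hz : Z i ω = -p := by simp [hZ, h0]
        rw [hz, h0, mul_zero, add_zero, mul_one, mul_neg]
      · have hz : Z i ω = 1 - p := by simp [hZ, h1]
        rw [hz, h1, mul_one]
        have he : 1 + (exp t - 1) = exp t := by ring
        rw [he, ← Real.exp_add]
        congr 1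
        ring
    rw [mgf]
    simp_rw [hptw]
    rw [integral_const_mul, integral_add (integrable_const 1)
      ((my_int_bdd (hmeas i) (C := 1) (fun ω => by
        rcases hY01 i ω with h0 | h1
        · rw [h0]; norm_num
        · rw [h1]; norm_num)).const_mul _),
      integral_const, integral_const_mul, hmean i]
    simp only [probReal_univ, smul_eq_mul, one_mul]
    ring
  have hmgf : mgf (∑ i, Z i) P t ≤ exp ((n:ℝ) * t^2/8) := by
    rw [hZind.mgf_sum hZmeas]
    calc ∏ i : Fin n, mgf (Z i) P t = ∏ _i : Fin n, exp (-(t*p)) * (1 - p + p * exp t) :=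
          Finset.prod_congr rfl fun i _ => hmgfi i
      _ ≤ ∏ _i : Fin n, exp (t^2/8) := by
          apply Finset.prod_le_prod
          · intro i _
            have h1 : (0:ℝ) < 1 - p + p * exp t := by
              rcases hp1.lt_or_eq with hp | hp
              · nlinarith [exp_pos t, mul_nonneg hp0 (exp_pos t).le]
              · subst hp; simpa using exp_pos t
            positivity
          · intro i _
            exact my_hoeffding p t hp0 hp1
      _ = exp ((n:ℝ) * t^2/8) := by
          rw [Finset.prod_const, Finset.card_univ, Fintype.card_fin, ← Real.exp_nat_mul]
          congr 1
          ring
  -- combine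
  have hfinal : exp (-t * ((n:ℝ)*u)) * mgf (∑ i, Z i) P t ≤ exp (-(2 * n * u^2)) := by
    calc exp (-t * ((n:ℝ)*u)) * mgf (∑ i, Z i) P t
        ≤ exp (-t * ((n:ℝ)*u)) * exp ((n:ℝ) * t^2/8) := by
          gcongr
      _ = exp (-(2 * n * u^2)) := by
          rw [← Real.exp_add]
          congr 1
          rw [ht_def]
          ring
  rw [hsetEq]
  have hne : P {ω | (n:ℝ) * u ≤ (∑ i, Z i) ω} ≠ ⊤ := measure_ne_top _ _
  rw [← ENNReal.ofReal_toReal hne]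
  exact ENNReal.ofReal_le_ofReal (hchern.trans hfinal)

lemma my_binom_two {Ω : Type*} [MeasurableSpace Ω] (P : Measure Ω) [IsProbabilityMeasure P]
    (n : ℕ) (Y : Fin n → Ω → ℝ) (hY01 : ∀ i ω, Y i ω = 0 ∨ Y i ω = 1)
    (hmeas : ∀ i, Measurable (Y i))
    (hind : iIndepFun Y P)
    (p : ℝ) (hp0 : 0 ≤ p) (hp1 : p ≤ 1) (hmean : ∀ i, ∫ ω, Y i ω ∂P = p)
    (u : ℝ) (hu : 0 < u) :
    P {ω | (n:ℝ) * u ≤ |(∑ i, Y i ω) - n * p|} ≤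
      ENNReal.ofReal (2 * Real.exp (-(2 * n * u^2))) := by
  have hsub : {ω | (n:ℝ) * u ≤ |(∑ i, Y i ω) - n * p|} ⊆
      {ω | (n:ℝ) * u ≤ (∑ i, Y i ω) - n * p} ∪
      {ω | (n:ℝ) * u ≤ (∑ i, (fun j ω' => 1 - Y j ω') i ω) - n * (1 - p)} := by
    intro ω hω
    simp only [Set.mem_setOf_eq, le_abs] at hω
    rcases hω with h1 | h2
    · exact Or.inl h1
    · right
      simp only [Set.mem_setOf_eq, Finset.sum_sub_distrib, Finset.sum_const,
        Finset.card_univ, Fintype.card_fin, nsmul_eq_mul, mul_one]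
      linarith
  have h2 := my_binom_upper P n (fun j ω' => 1 - Y j ω')
    (fun i ω => by rcases hY01 i ω with h0 | h1
                   · right; show 1 - Y i ω = 1; rw [h0]; ring
                   · left; show 1 - Y i ω = 0; rw [h1]; ring)
    (fun i => measurable_const.sub (hmeas i))
    (by exact hind.comp (fun _ (x:ℝ) => 1 - x) (fun _ => measurable_const.sub measurable_id))
    (1 - p) (by linarith) (by linarith)
    (fun i => by
      rw [integral_sub (integrable_const 1) (my_int_bdd (hmeas i) (C := 1) (fun ω => by
        rcases hY01 i ω with h0 | h1
        · rw [h0]; norm_num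
        · rw [h1]; norm_num)), integral_const, hmean i]
      simp) u hu
  have h1 := my_binom_upper P n Y hY01 hmeas hind p hp0 hp1 hmean u hu
  calc P {ω | (n:ℝ) * u ≤ |(∑ i, Y i ω) - n * p|} ≤ _ := measure_mono hsub
    _ ≤ _ + _ := measure_union_le _ _
    _ ≤ ENNReal.ofReal (Real.exp (-(2 * n * u^2))) + ENNReal.ofReal (Real.exp (-(2 * n * u^2))) :=
        add_le_add h1 h2
    _ = ENNReal.ofReal (2 * Real.exp (-(2 * n * u^2))) := by
        rw [← ENNReal.ofReal_add (exp_pos _).le (exp_pos _).le]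
        congr 1
        ring

lemma my_bias (pdf : ℝ → ℝ) (L : ℝ) (hL : 0 ≤ L)
    (hLip : ∀ x y : ℝ, |pdf x - pdf y| ≤ L * |x - y|)
    (c d t : ℝ) (hct : c ≤ t) (htd : t ≤ d) :
    |(∫ s in c..d, pdf s) - (d - c) * pdf t| ≤ L * (d - c)^2 / 2 := by
  have hcd : c ≤ d := hct.trans htd
  have hcont : Continuous pdf := by
    have : LipschitzWith ⟨L, hL⟩ pdf := by
      apply LipschitzWith.of_dist_le_mul
      intro x y
      rw [Real.dist_eq, Real.dist_eq]
      exact hLip x y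
    exact this.continuous
  have hconst : (d - c) * pdf t = ∫ s in c..d, pdf t := by
    rw [intervalIntegral.integral_const]
    simp [mul_comm]
  rw [hconst, ← intervalIntegral.integral_sub (hcont.intervalIntegrable c d)
    (intervalIntegrable_const)]
  have habs : |∫ s in c..d, (pdf s - pdf t)| ≤ ∫ s in c..d, |pdf s - pdf t| := by
    apply intervalIntegral.abs_integral_le_integral_abs hcd
  refine habs.trans ?_
  have hmono : ∫ s in c..d, |pdf s - pdf t| ≤ ∫ s in c..d, L * |s - t| := by
    apply intervalIntegral.integral_mono_on hcd
    · exact (hcont.sub continuous_const).abs.intervalIntegrable c d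
    · exact (by continuity : Continuous fun s : ℝ => L * |s - t|).intervalIntegrable c d
    · intro x _
      exact hLip x t
  refine hmono.trans ?_
  have hsplit : ∫ s in c..d, L * |s - t| =
      (∫ s in c..t, L * (t - s)) + ∫ s in t..d, L * (s - t) := by
    rw [← intervalIntegral.integral_add_adjacent_intervals
      ((by continuity : Continuous fun s : ℝ => L * |s - t|).intervalIntegrable c t)
      ((by continuity : Continuous fun s : ℝ => L * |s - t|).intervalIntegrable t d)]
    congr 1
    · apply intervalIntegral.integral_congr
      intro s hs
      rw [Set.uIcc_of_le hct] at hs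
      have : s ≤ t := hs.2
      show L * |s - t| = L * (t - s)
      rw [abs_of_nonpos (by linarith)]
      ring
    · apply intervalIntegral.integral_congr
      intro s hs
      rw [Set.uIcc_of_le htd] at hs
      have : t ≤ s := hs.1
      show L * |s - t| = L * (s - t)
      rw [abs_of_nonneg (by linarith)]
  have h1 : ∫ s in c..t, L * (t - s) = L * (t - c)^2 / 2 := by
    have : ∫ s in c..t, L * (t - s) = L * t * (t - c) - L * ((t^2 - c^2)/2) := by
      have e1 : (fun s => L * (t - s)) = fun s : ℝ => L * t - L * s := by
        funext s; ring
      rw [e1, intervalIntegral.integral_sub intervalIntegrable_const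
        ((by continuity : Continuous fun s : ℝ => L * s).intervalIntegrable c t),
        intervalIntegral.integral_const]
      simp only [smul_eq_mul]
      rw [intervalIntegral.integral_const_mul, integral_id]
      ring
    rw [this]; ring
  have h2 : ∫ s in t..d, L * (s - t) = L * (d - t)^2 / 2 := by
    have : ∫ s in t..d, L * (s - t) = L * ((d^2 - t^2)/2) - L * t * (d - t) := by
      have e1 : (fun s => L * (s - t)) = fun s : ℝ => L * s - L * t := by
        funext s; ring
      rw [e1, intervalIntegral.integral_sub
        ((by continuity : Continuous fun s : ℝ => L * s).intervalIntegrable t d) intervalIntegrable_const,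
        intervalIntegral.integral_const]
      simp only [smul_eq_mul]
      rw [intervalIntegral.integral_const_mul, integral_id]
      ring
    rw [this]; ring
  rw [hsplit, h1, h2]
  nlinarith [sq_nonneg (t - c), sq_nonneg (d - t), mul_nonneg (sub_nonneg.mpr hct) (sub_nonneg.mpr htd)]

lemma my_exp_mono (n : ℕ) (h γ L : ℝ) (hn' : (0:ℝ) < n) :
    Real.exp (-(2 * n * ((γ - L * h) * h / 2)^2)) ≤
      Real.exp (-(h ^ 2 * (γ - L * h) ^ 2 * n / 4)) := by
  apply Real.exp_le_exp.mpr
  nlinarith [mul_nonneg (mul_nonneg hn'.le (sq_nonneg h)) (sq_nonneg (γ - L*h))]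

/-- Utility of the private histogram density estimator: for i.i.d. samples from
an `L`-Lipschitz density `π` on `[0,1]`, the `ε`-DP histogram estimator with
bin size `h` (with `1/h = N ∈ ℕ` bins, each bin count perturbed by independent
Laplace(1) noise scaled by `2/ε`) satisfies, for any `γ > Lh`,
`P(‖π̂ - π‖_∞ > γ) ≤ (1/h)exp(-γhnε/4) + (2/h)exp(-h²(γ-Lh)²n/4)`. -/
theorem stmt_10 {Ω : Type*} [MeasurableSpace Ω] (P : Measure Ω) [IsProbabilityMeasure P]
    (n : ℕ) (hn : 1 ≤ n)
    (pdf : ℝ → ℝ) (L : ℝ) (hL : 0 ≤ L)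
    (hLip : ∀ x y : ℝ, |pdf x - pdf y| ≤ L * |x - y|)
    (hnonneg : ∀ x ∈ Set.Icc (0:ℝ) 1, 0 ≤ pdf x)
    (h : ℝ) (hh : 0 < h) (N : ℕ) (hN : 1 ≤ N) (hNh : (N : ℝ) * h = 1)
    (ε : ℝ) (hε : 0 < ε)
    (X : Fin n → Ω → ℝ) (hX : ∀ i, Measurable (X i))
    (Lap : ℕ → Ω → ℝ) (hLapMeas : ∀ k, Measurable (Lap k))
    (hindep : iIndepFun
      (Sum.elim X (fun j : Fin N => Lap j.1)) P)
    (hlaw : ∀ i, Measure.map (X i) P =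
      (volume.restrict (Set.Icc (0:ℝ) 1)).withDensity (fun x => ENNReal.ofReal (pdf x)))
    (hLapLaw : ∀ k < N, Measure.map (Lap k) P =
      volume.withDensity (fun t => ENNReal.ofReal ((1/2) * Real.exp (-|t|))))
    (B : ℕ → Set ℝ)
    (hB : ∀ k, B k = if k = N - 1 then Set.Icc ((k:ℝ) * h) ((k + 1) * h)
      else Set.Ico ((k:ℝ) * h) ((k + 1) * h))
    (binIdx : ℝ → ℕ) (hbinIdx : ∀ t, binIdx t = min (N - 1) ⌊t / h⌋₊)
    (pdfHat : Ω → ℝ → ℝ)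
    (hpdfHat : ∀ ω t, pdfHat ω t = (1 / (n * h)) *
      ((∑ i, if X i ω ∈ B (binIdx t) then (1:ℝ) else 0) + (2 / ε) * Lap (binIdx t) ω))
    (γ : ℝ) (hγ : γ > L * h) :
    P {ω | ∃ t ∈ Set.Icc (0:ℝ) 1, |pdfHat ω t - pdf t| > γ} ≤
      ENNReal.ofReal ((1 / h) * Real.exp (-(γ * h * n * ε / 4)) +
        (2 / h) * Real.exp (-(h ^ 2 * (γ - L * h) ^ 2 * n / 4))) := by
  have hn' : (0:ℝ) < n := by exact_mod_cast hn
  have hγ0 : 0 < γ := lt_of_le_of_lt (mul_nonneg hL hh.le) hγ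
  set a : ℝ := γ * h * n * ε / 4 with ha_def
  have ha : 0 ≤ a := by positivity
  set u : ℝ := (γ - L * h) * h / 2 with hu_def
  have hu : 0 < u := by
    have : 0 < γ - L * h := by linarith
    positivity
  -- continuity of pdf
  have hcont : Continuous pdf := by
    have : LipschitzWith ⟨L, hL⟩ pdf := by
      apply LipschitzWith.of_dist_le_mul
      intro x y
      rw [Real.dist_eq, Real.dist_eq]
      exact hLip x y
    exact this.continuous
  -- bin basics
  have hBmeas : ∀ k, MeasurableSet (B k) := by
    intro k
    rw [hB k]
    split_ifs
    · exact measurableSet_Icc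
    · exact measurableSet_Ico
  have hBsub : ∀ k, B k ⊆ Set.Icc ((k:ℝ) * h) (((k:ℝ) + 1) * h) := by
    intro k
    rw [hB k]
    split_ifs
    · exact subset_rfl
    · exact Set.Ico_subset_Icc_self
  have hBsub01 : ∀ k < N, B k ⊆ Set.Icc (0:ℝ) 1 := by
    intro k hk
    refine (hBsub k).trans ?_
    apply Set.Icc_subset_Icc
    · positivity
    · rw [← hNh]
      have : (k:ℝ) + 1 ≤ (N:ℝ) := by exact_mod_cast Nat.succ_le_of_lt hk
      nlinarith
  -- bin probability
  set pk : ℕ → ℝ := fun k => ∫ s in ((k:ℝ) * h)..(((k:ℝ) + 1) * h), pdf s with hpk_def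
  have hpk_int : ∀ k : ℕ, pk k = ∫ x in B k, pdf x ∂volume := by
    intro k
    show (∫ s in ((k:ℝ) * h)..(((k:ℝ) + 1) * h), pdf s) = _
    have hle : (k:ℝ) * h ≤ ((k:ℝ) + 1) * h := by nlinarith
    rw [intervalIntegral.integral_of_le hle, hB k]
    split_ifs
    · exact (integral_Icc_eq_integral_Ioc).symm
    · exact (setIntegral_congr_set Ico_ae_eq_Ioc).symm
  have hmap : ∀ k < N, ∀ i, Measure.map (X i) P (B k) = ENNReal.ofReal (pk k) := by
    intro k hk i
    rw [hlaw i, withDensity_apply _ (hBmeas k), Measure.restrict_restrict (hBmeas k),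
      Set.inter_eq_self_of_subset_left (hBsub01 k hk)]
    rw [hpk_int k]
    have hIntOn : IntegrableOn pdf (B k) volume :=
      (hcont.integrableOn_Icc).mono_set (hBsub k)
    have hae : 0 ≤ᵐ[volume.restrict (B k)] pdf := by
      apply (ae_restrict_iff' (hBmeas k)).mpr
      exact Filter.Eventually.of_forall fun x hx => hnonneg x (hBsub01 k hk hx)
    exact (ofReal_integral_eq_lintegral_ofReal hIntOn hae).symm ▸ rfl
  have hpk0 : ∀ k < N, 0 ≤ pk k := by
    intro k hk
    rw [hpk_int k]
    apply setIntegral_nonneg (hBmeas k)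
    intro x hx
    exact hnonneg x (hBsub01 k hk hx)
  have hpk1 : ∀ k < N, pk k ≤ 1 := by
    intro k hk
    set i0 : Fin n := ⟨0, hn⟩ with hi0
    have hprob : IsProbabilityMeasure (Measure.map (X i0) P) :=
      Measure.isProbabilityMeasure_map (hX i0).aemeasurable
    have := hmap k hk i0
    have hle1 : Measure.map (X i0) P (B k) ≤ 1 := prob_le_one
    rw [this] at hle1
    exact (ENNReal.ofReal_le_one).mp hle1
  -- indicator variables
  set Y : ℕ → Fin n → Ω → ℝ := fun k i ω => if X i ω ∈ B k then (1:ℝ) else 0 with hY_def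
  have hY01 : ∀ k i ω, Y k i ω = 0 ∨ Y k i ω = 1 := by
    intro k i ω
    by_cases hmem : X i ω ∈ B k
    · right; simp [hY_def, hmem]
    · left; simp [hY_def, hmem]
  have hYmeas : ∀ k i, Measurable (Y k i) := by
    intro k i
    apply Measurable.ite ((hX i) (hBmeas k)) measurable_const measurable_const
  have hYind : ∀ k, iIndepFun (Y k) P := by
    intro k
    have hXind : iIndepFun X P := by
      have := my_precomp hindep (g := Sum.inl (β := Fin N)) Sum.inl_injective
      exact this
    have := hXind.comp (fun _ (x : ℝ) => if x ∈ B k then (1:ℝ) else 0)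
      (fun _ => Measurable.ite (hBmeas k) measurable_const measurable_const)
    exact this
  have hYmean : ∀ k < N, ∀ i, ∫ ω, Y k i ω ∂P = pk k := by
    intro k hk i
    have hind_eq : (fun ω => Y k i ω) = Set.indicator (X i ⁻¹' B k) (fun _ => (1:ℝ)) := by
      funext ω
      by_cases hmem : X i ω ∈ B k
      · simp [hY_def, hmem, Set.indicator_apply, Set.mem_preimage]
      · simp [hY_def, hmem, Set.indicator_apply, Set.mem_preimage]
    rw [hind_eq, integral_indicator_const (1:ℝ) ((hX i) (hBmeas k))]
    rw [measureReal_def, ← Measure.map_apply (hX i) (hBmeas k), hmap k hk i,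
      ENNReal.toReal_ofReal (hpk0 k hk)]
    simp
  -- the bad events
  set A : Fin N → Set Ω := fun k => {ω | a < |Lap k.1 ω|} with hA_def
  set C : Fin N → Set Ω := fun k =>
    {ω | (n:ℝ) * u ≤ |(∑ i, Y k.1 i ω) - n * pk k.1|} with hC_def
  -- tail bounds
  have hAbound : ∀ k : Fin N, P (A k) ≤ ENNReal.ofReal (Real.exp (-a)) := by
    intro k
    have hmset : MeasurableSet {x : ℝ | a < |x|} :=
      measurableSet_lt measurable_const continuous_abs.measurable
    have : A k = Lap k.1 ⁻¹' {x : ℝ | a < |x|} := rfl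
    rw [this, ← Measure.map_apply (hLapMeas k.1) hmset, hLapLaw k.1 k.isLt]
    exact my_laplace_tail a ha
  have hCbound : ∀ k : Fin N, P (C k) ≤ ENNReal.ofReal (2 * Real.exp (-(2 * n * u^2))) := by
    intro k
    exact my_binom_two P n (Y k.1) (hY01 k.1) (hYmeas k.1) (hYind k.1) (pk k.1)
      (hpk0 k.1 k.isLt) (hpk1 k.1 k.isLt) (hYmean k.1 k.isLt) u hu
  -- event inclusion
  have hincl : {ω | ∃ t ∈ Set.Icc (0:ℝ) 1, |pdfHat ω t - pdf t| > γ} ⊆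
      ⋃ k : Fin N, (A k ∪ C k) := by
    rintro ω ⟨t, ht, hgt⟩
    have h0t : (0:ℝ) ≤ t := ht.1
    have ht1 : t ≤ 1 := ht.2
    have hkN : binIdx t < N := by rw [hbinIdx]; omega
    have h0div : (0:ℝ) ≤ t / h := by positivity
    have htB : t ∈ B (binIdx t) := by
      by_cases hm : ⌊t / h⌋₊ ≤ N - 1
      · have hk : binIdx t = ⌊t / h⌋₊ := by rw [hbinIdx]; omega
        have hfl : (⌊t / h⌋₊ : ℝ) ≤ t / h := Nat.floor_le h0div
        have hfu : t / h < (⌊t / h⌋₊ : ℝ) + 1 := Nat.lt_floor_add_one _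
        have hlo : (⌊t / h⌋₊ : ℝ) * h ≤ t := (le_div_iff₀ hh).mp hfl
        have hhi : t < ((⌊t / h⌋₊ : ℝ) + 1) * h := (div_lt_iff₀ hh).mp hfu
        rw [hk, hB]
        split_ifs
        · exact ⟨hlo, hhi.le⟩
        · exact ⟨hlo, hhi⟩
      · have hmN : N ≤ ⌊t / h⌋₊ := by omega
        have hk : binIdx t = N - 1 := by rw [hbinIdx]; omega
        have hNf : (N:ℝ) ≤ (⌊t / h⌋₊ : ℝ) := by exact_mod_cast hmN
        have hfl : (⌊t / h⌋₊ : ℝ) ≤ t / h := Nat.floor_le h0div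
        have hNt : (N:ℝ) * h ≤ t := (le_div_iff₀ hh).mp (hNf.trans hfl)
        have hcast : ((N - 1 : ℕ) : ℝ) = (N:ℝ) - 1 := by
          have : (1:ℕ) ≤ N := hN
          push_cast [Nat.cast_sub this]
          ring
        rw [hk, hB]
        rw [if_pos rfl]
        constructor
        · rw [hcast]; nlinarith
        · rw [hcast]; nlinarith
    set k0 := binIdx t with hk0
    apply Set.mem_iUnion.mpr
    refine ⟨⟨k0, hkN⟩, ?_⟩
    by_contra hcon
    rw [Set.mem_union] at hcon
    push_neg at hcon
    have hΛ : |Lap k0 ω| ≤ a := not_lt.mp (by simpa [hA_def] using hcon.1)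
    set S : ℝ := ∑ i, Y k0 i ω with hS_def
    have hSlt : |S - ↑n * pk k0| < ↑n * u := not_le.mp (by simpa [hC_def, hS_def] using hcon.2)
    have hctd : ((k0:ℝ) * h ≤ t ∧ t ≤ ((k0:ℝ) + 1) * h) := hBsub k0 htB
    have hpkk : pk k0 = ∫ s in ((k0:ℝ) * h)..(((k0:ℝ) + 1) * h), pdf s := rfl
    have hbias : |pk k0 - h * pdf t| ≤ L * h^2 / 2 := by
      have hb := my_bias pdf L hL hLip ((k0:ℝ)*h) (((k0:ℝ)+1)*h) t hctd.1 hctd.2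
      have hd : ((k0:ℝ)+1)*h - (k0:ℝ)*h = h := by ring
      rw [hd] at hb
      rw [hpkk]
      exact hb
    have hEq : pdfHat ω t - pdf t =
        (S - ↑n * pk k0)/(↑n*h) + (2*Lap k0 ω)/(ε*↑n*h) + (pk k0 - h * pdf t)/h := by
      rw [hpdfHat ω t]
      have hSdef : (∑ i, if X i ω ∈ B (binIdx t) then (1:ℝ) else 0) = S := rfl
      rw [hSdef, ← hk0]
      field_simp
      ring
    have haa : a = γ * h * ↑n * ε / 4 := ha_def
    have huu : u = (γ - L * h) * h / 2 := hu_def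
    have h1 : |(S - ↑n * pk k0)/(↑n*h)| < u/h := by
      rw [abs_div, abs_of_pos (by positivity : (0:ℝ) < ↑n*h),
        div_lt_div_iff₀ (by positivity) hh]
      exact (mul_lt_mul_of_pos_right hSlt hh).trans_eq (by ring)
    have h2 : |(2*Lap k0 ω)/(ε*↑n*h)| ≤ γ/2 := by
      rw [abs_div, abs_of_pos (by positivity : (0:ℝ) < ε*↑n*h),
        div_le_iff₀ (by positivity), abs_mul, abs_two]
      calc 2 * |Lap k0 ω| ≤ 2 * a := by linarith
        _ = γ/2 * (ε*↑n*h) := by rw [haa]; ring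
    have h3 : |(pk k0 - h*pdf t)/h| ≤ L*h/2 := by
      rw [abs_div, abs_of_pos hh, div_le_iff₀ hh]
      exact hbias.trans_eq (by ring)
    have huh : u/h = (γ - L*h)/2 := by
      rw [huu]
      field_simp
    have hlt : |pdfHat ω t - pdf t| < γ := by
      rw [hEq]
      calc |(S - ↑n * pk k0)/(↑n*h) + (2*Lap k0 ω)/(ε*↑n*h) + (pk k0 - h * pdf t)/h|
          ≤ |(S - ↑n * pk k0)/(↑n*h) + (2*Lap k0 ω)/(ε*↑n*h)| + |(pk k0 - h * pdf t)/h| :=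
            abs_add_le _ _
        _ ≤ |(S - ↑n * pk k0)/(↑n*h)| + |(2*Lap k0 ω)/(ε*↑n*h)| + |(pk k0 - h * pdf t)/h| := by
            linarith [abs_add_le ((S - ↑n * pk k0)/(↑n*h)) ((2*Lap k0 ω)/(ε*↑n*h))]
        _ < u/h + γ/2 + L*h/2 := by linarith
        _ = γ := by rw [huh]; ring
    exact absurd hgt (not_lt.mpr hlt.le)
  -- final computation
  calc P {ω | ∃ t ∈ Set.Icc (0:ℝ) 1, |pdfHat ω t - pdf t| > γ}
      ≤ P (⋃ k : Fin N, (A k ∪ C k)) := measure_mono hincl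
    _ ≤ ∑' k : Fin N, P (A k ∪ C k) := measure_iUnion_le _
    _ = ∑ k : Fin N, P (A k ∪ C k) := tsum_fintype _
    _ ≤ ∑ _k : Fin N, (ENNReal.ofReal (Real.exp (-a)) +
          ENNReal.ofReal (2 * Real.exp (-(2 * n * u^2)))) :=
        Finset.sum_le_sum fun k _ =>
          (measure_union_le _ _).trans (add_le_add (hAbound k) (hCbound k))
    _ = (N : ENNReal) * (ENNReal.ofReal (Real.exp (-a)) +
          ENNReal.ofReal (2 * Real.exp (-(2 * n * u^2)))) := by
        rw [Finset.sum_const, Finset.card_univ, Fintype.card_fin, nsmul_eq_mul]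
    _ ≤ ENNReal.ofReal ((1 / h) * Real.exp (-(γ * h * n * ε / 4)) +
        (2 / h) * Real.exp (-(h ^ 2 * (γ - L * h) ^ 2 * n / 4))) := by
        rw [← ENNReal.ofReal_add (by positivity) (by positivity),
          ← ENNReal.ofReal_natCast N,
          ← ENNReal.ofReal_mul (by positivity)]
        apply ENNReal.ofReal_le_ofReal
        have hNr : (N:ℝ) = 1/h := by
          rw [eq_div_iff hh.ne']
          exact hNh
        have haa : a = γ * h * ↑n * ε / 4 := ha_def
        have huu : u = (γ - L * h) * h / 2 := hu_def
        have hexp2 : Real.exp (-(2 * n * u^2)) ≤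
            Real.exp (-(h ^ 2 * (γ - L * h) ^ 2 * n / 4)) := by
          rw [huu]
          exact my_exp_mono n h γ L hn'
        have he1 : Real.exp (-a) = Real.exp (-(γ * h * ↑n * ε / 4)) := by rw [haa]
        rw [hNr, he1]
        calc (1/h) * (Real.exp (-(γ * h * ↑n * ε / 4)) + 2 * Real.exp (-(2 * n * u^2)))
            = (1/h) * Real.exp (-(γ * h * ↑n * ε / 4)) +
              (2/h) * Real.exp (-(2 * n * u^2)) := by ring
          _ ≤ (1 / h) * Real.exp (-(γ * h * ↑n * ε / 4)) +
              (2 / h) * Real.exp (-(h ^ 2 * (γ - L * h) ^ 2 * ↑n / 4)) := by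
              gcongr
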